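/- Let n ≥ 2 and let d be a positive integer with 4d < n. Let L : {-1,1}^n → ℝ be a function of degree at most D = 4d satisfying: E[L·p] ≥ 0 for every nonnegative 4d-junta p; |L̂(S)| ≤ 1 for every S ⊆ [n] with |S| ≤ 4d; and ‖L‖∞ ≤ n^{4d}. Then for every nonnegative d-junta c : {-1,1}^n → ℝ≥0 with ‖c‖∞ ≤ 1 and every (1/n⁴)-decaying function h : {-1,1}^n → ℝ, one has E[L·c·(1+h)] ≥ −n^{−8d}. -/

import Mathlib

open scoped BigOperators

noncomputable section

/-- Sign of a Boolean bit, encoding `b ↦ (-1)^b ∈ {-1,1}`. -/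
def sgn (x : Bool) : ℝ := if x then -1 else 1

/-- Expectation under the uniform distribution on a finite type. -/
def uexp {Ω : Type*} [Fintype Ω] (f : Ω → ℝ) : ℝ :=
  (∑ x, f x) / (Fintype.card Ω : ℝ)

/-- The parity character `χ_S(x) = ∏_{i ∈ S} x_i` on the cube `{-1,1}^n`. -/
def chi {n : ℕ} (S : Finset (Fin n)) (x : Fin n → Bool) : ℝ :=
  ∏ i ∈ S, sgn (x i)

/-- Fourier coefficient `f̂(S) = E[f · χ_S]`. -/
def fCoeff {n : ℕ} (f : (Fin n → Bool) → ℝ) (S : Finset (Fin n)) : ℝ :=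
  uexp (fun x => f x * chi S x)

open Classical in
/-- Fourier degree: the largest `|S|` with `f̂(S) ≠ 0`. -/
def fdeg {n : ℕ} (f : (Fin n → Bool) → ℝ) : ℕ :=
  (Finset.univ.filter (fun S : Finset (Fin n) => fCoeff f S ≠ 0)).sup Finset.card

/-- A `d`-junta: a function depending on at most `d` coordinates. -/
def IsJunta {n : ℕ} (d : ℕ) (h : (Fin n → Bool) → ℝ) : Prop :=
  ∃ T : Finset (Fin n), T.card ≤ d ∧ ∀ x y, (∀ i ∈ T, x i = y i) → h x = h y

/-- A conical `d`-junta: a nonnegative combination of nonnegative `d`-juntas. -/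
def IsConicalJunta {n : ℕ} (d : ℕ) (f : (Fin n → Bool) → ℝ) : Prop :=
  ∃ (N : ℕ) (c : Fin N → ℝ) (g : Fin N → (Fin n → Bool) → ℝ),
    (∀ i, 0 ≤ c i) ∧ (∀ i x, 0 ≤ g i x) ∧ (∀ i, IsJunta d (g i)) ∧
    ∀ x, f x = ∑ i, c i * g i x

/-- Nonnegative degree `deg₊(f)`: least `d` such that `f` is a conical `d`-junta. -/
def degPlus {n : ℕ} (f : (Fin n → Bool) → ℝ) : ℕ :=
  sInf {d | IsConicalJunta d f}

/-- The (modified inner-product) gadget `g : {0,1}^b × {0,1}^b → {-1,1}`,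
with output encoded as a Boolean exponent: `g(x,y) = x₁ ⊕ y₁ ⊕ (⊕ᵢ xᵢyᵢ)`. -/
def gadget {b : ℕ} (x y : Fin b → Bool) : Bool :=
  decide (((∑ i : Fin b,
        (if x i then (1 : ZMod 2) else 0) * (if y i then (1 : ZMod 2) else 0))
    + (if h : 0 < b then
        (if x ⟨0, h⟩ then (1 : ZMod 2) else 0) + (if y ⟨0, h⟩ then (1 : ZMod 2) else 0)
      else 0)) = 1)

/-- `G = g^{⊗n}`, the gadget applied coordinatewise. -/
def gadgetN {n b : ℕ} (x y : Fin n → Fin b → Bool) : Fin n → Bool :=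
  fun i => gadget (x i) (y i)

/-- The pattern matrix `M_f^b(x,y) = f(g^{⊗n}(x,y))`. -/
def patternMatrix {n : ℕ} (b : ℕ) (f : (Fin n → Bool) → ℝ) :
    (Fin n → Fin b → Bool) → (Fin n → Fin b → Bool) → ℝ :=
  fun x y => f (gadgetN x y)

/-- Nonnegative rank: least `r` such that `M` is a sum of `r` nonnegative rank-1 matrices. -/
def nnRank {α β : Type*} [Fintype α] [Fintype β] (M : α → β → ℝ) : ℕ :=
  sInf {r | ∃ (u : Fin r → α → ℝ) (v : Fin r → β → ℝ),
    (∀ i a, 0 ≤ u i a) ∧ (∀ i b, 0 ≤ v i b) ∧ ∀ a b, M a b = ∑ i, u i a * v i b}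

/-- Entrywise sup-norm of a matrix. -/
def supAbs {α β : Type*} [Fintype α] [Fintype β] (M : α → β → ℝ) : ℝ :=
  ⨆ p : α × β, |M p.1 p.2|

/-- `ε`-approximate nonnegative rank. -/
def approxNNRank {α β : Type*} [Fintype α] [Fintype β] (ε : ℝ) (M : α → β → ℝ) : ℕ :=
  sInf {r | ∃ M' : α → β → ℝ, (∀ a b, 0 ≤ M' a b) ∧
    (∀ a b, |M' a b - M a b| ≤ ε * supAbs M) ∧ nnRank M' ≤ r}

/-- A density: nonnegative with expectation 1 under the uniform distribution. -/
def IsDensity {Ω : Type*} [Fintype Ω] (u : Ω → ℝ) : Prop :=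
  (∀ x, 0 ≤ u x) ∧ uexp u = 1

/-- `Pr_{X ~ μ}[X ∈ S]` for a density `μ`. -/
def prSet {Ω : Type*} [Fintype Ω] (μ : Ω → ℝ) (S : Finset Ω) : ℝ :=
  (∑ x ∈ S, μ x) / (Fintype.card Ω : ℝ)

/-- Min-entropy `H∞(u) = min_x log₂(|Ω| / u(x)) = -log₂ max_x Pr[X = x]`. -/
def minEntropy {Ω : Type*} [Fintype Ω] (u : Ω → ℝ) : ℝ :=
  - Real.logb 2 (⨆ x, u x / (Fintype.card Ω : ℝ))

open Classical in
/-- `Pr_{X ~ u}[X_I = y_I]`, the probability that the projection to `I` agrees with `y`. -/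
def prMarg {n : ℕ} {α : Type*} [Fintype α] (u : (Fin n → α) → ℝ) (I : Finset (Fin n))
    (y : Fin n → α) : ℝ :=
  (∑ x ∈ Finset.univ.filter (fun x : Fin n → α => ∀ i ∈ I, x i = y i), u x)
    / (Fintype.card (Fin n → α) : ℝ)

/-- Min-entropy of the projection `X_I` for `X ~ u`. -/
def projMinEntropy {n : ℕ} {α : Type*} [Fintype α] (u : (Fin n → α) → ℝ)
    (I : Finset (Fin n)) : ℝ :=
  - Real.logb 2 (⨆ y : Fin n → α, prMarg u I y)

/-- Blockwise-dense: every projection has min-entropy at least `0.8 |I| log₂ q`. -/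
def IsBlockwiseDense {n : ℕ} {α : Type*} [Fintype α] (u : (Fin n → α) → ℝ) : Prop :=
  ∀ I : Finset (Fin n),
    0.8 * (I.card : ℝ) * Real.logb 2 (Fintype.card α) ≤ projMinEntropy u I

/-- `d`-CBD with fixed set `I`: `X_I` is fixed and every disjoint projection is dense. -/
def IsCBDWith {n : ℕ} {α : Type*} [Fintype α] (d : ℝ) (I : Finset (Fin n))
    (u : (Fin n → α) → ℝ) : Prop :=
  (I.card : ℝ) ≤ d ∧ projMinEntropy u I = 0 ∧
  ∀ J : Finset (Fin n), Disjoint J I →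
    0.8 * (J.card : ℝ) * Real.logb 2 (Fintype.card α) ≤ projMinEntropy u J

/-- `d`-CBD distribution. -/
def IsCBD {n : ℕ} {α : Type*} [Fintype α] (d : ℝ) (u : (Fin n → α) → ℝ) : Prop :=
  ∃ I, IsCBDWith d I u

open Classical in
/-- `Acc_{u,v}`: the density on `{-1,1}^n` of `g^{⊗n}(X,Y)` for independent `X ~ u`, `Y ~ v`. -/
def AccFn {n b : ℕ} (u v : (Fin n → Fin b → Bool) → ℝ) (z : Fin n → Bool) : ℝ :=
  (2 : ℝ) ^ n * (∑ x : Fin n → Fin b → Bool, ∑ y : Fin n → Fin b → Bool,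
      if gadgetN x y = z then u x * v y else 0)
    / (Fintype.card (Fin n → Fin b → Bool) : ℝ) ^ 2

/-- `ε`-decaying function: mean zero with `|ĥ(S)| ≤ ε^{|S|}`. -/
def IsDecaying {n : ℕ} (ε : ℝ) (h : (Fin n → Bool) → ℝ) : Prop :=
  uexp h = 0 ∧ ∀ S : Finset (Fin n), |fCoeff h S| ≤ ε ^ S.card

/-- A `d`-conjunction, normalized to have expectation 1. -/
def IsConjunction {n : ℕ} (d : ℕ) (C : (Fin n → Bool) → ℝ) : Prop :=
  ∃ (I : Finset (Fin n)) (a : Fin n → Bool), I.card ≤ d ∧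
    ∀ x, C x = 2 ^ I.card * (if ∀ i ∈ I, x i = a i then (1 : ℝ) else 0)

/-- `(ε,δ)`-approximate conical `d`-junta. -/
def IsApproxConicalJunta {n : ℕ} (ε δ : ℝ) (d : ℕ) (f : (Fin n → Bool) → ℝ) : Prop :=
  ∃ (N : ℕ) (lam : Fin N → ℝ) (C h : Fin N → (Fin n → Bool) → ℝ)
    (γ : (Fin n → Bool) → ℝ),
    (∀ i, 0 ≤ lam i) ∧ (∑ i, lam i) ≤ 1 ∧
    (∀ i, IsConjunction d (C i)) ∧ (∀ i, IsDecaying ε (h i)) ∧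
    (∀ x, 0 ≤ γ x) ∧ uexp γ ≤ δ ∧
    ∀ x, f x = (∑ i, lam i * C i x * (1 + h i x)) + γ x

open Classical in
/-- The density `μ` conditioned on the event `S`. -/
def condDensity {Ω : Type*} [Fintype Ω] (μ : Ω → ℝ) (S : Finset Ω) : Ω → ℝ :=
  fun x => if x ∈ S then μ x / prSet μ S else 0

/-- First marginal density of a density on a product. -/
def margFst {Ω : Type*} [Fintype Ω] (μ : Ω × Ω → ℝ) : Ω → ℝ :=
  fun x => (∑ y, μ (x, y)) / (Fintype.card Ω : ℝ)

/-- Second marginal density of a density on a product. -/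
def margSnd {Ω : Type*} [Fintype Ω] (μ : Ω × Ω → ℝ) : Ω → ℝ :=
  fun y => (∑ x, μ (x, y)) / (Fintype.card Ω : ℝ)

open Classical in
/-- `Pr_{(X,Y) ~ μ}[X_I = y.1_I ∧ Y_I = y.2_I]`. -/
def prMarg2 {n : ℕ} {α : Type*} [Fintype α]
    (μ : (Fin n → α) × (Fin n → α) → ℝ) (I : Finset (Fin n))
    (y : (Fin n → α) × (Fin n → α)) : ℝ :=
  (∑ x ∈ Finset.univ.filter
      (fun x : (Fin n → α) × (Fin n → α) =>
        (∀ i ∈ I, x.1 i = y.1 i) ∧ (∀ i ∈ I, x.2 i = y.2 i)), μ x)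
    / (Fintype.card ((Fin n → α) × (Fin n → α)) : ℝ)

/-- Min-entropy of the projection `μ_I` of a density on a product, projecting both factors. -/
def projMinEntropy2 {n : ℕ} {α : Type*} [Fintype α]
    (μ : (Fin n → α) × (Fin n → α) → ℝ) (I : Finset (Fin n)) : ℝ :=
  - Real.logb 2 (⨆ y : (Fin n → α) × (Fin n → α), prMarg2 μ I y)

namespace Stmt9Aux

open Finset

variable {n : ℕ}

lemma sgn_mul_self (b : Bool) : sgn b * sgn b = 1 := by cases b <;> simp [sgn]

lemma abs_sgn (b : Bool) : |sgn b| = 1 := by cases b <;> simp [sgn]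

lemma sgn_not (b : Bool) : sgn (!b) = - sgn b := by cases b <;> simp [sgn]

lemma card_cube : (Fintype.card (Fin n → Bool) : ℝ) = 2 ^ n := by
  simp [Fintype.card_fun]

lemma two_pow_pos : (0:ℝ) < 2 ^ n := by positivity

lemma abs_chi (S : Finset (Fin n)) (x : Fin n → Bool) : |chi S x| = 1 := by
  unfold chi
  rw [Finset.abs_prod]
  exact Finset.prod_eq_one fun i _ => abs_sgn (x i)

lemma chi_eq_prod_univ (S : Finset (Fin n)) (x : Fin n → Bool) :
    chi S x = ∏ i, (if i ∈ S then sgn (x i) else 1) := by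
  rw [Finset.prod_ite_mem, Finset.univ_inter]; rfl

lemma chi_mul (S T : Finset (Fin n)) (x : Fin n → Bool) :
    chi S x * chi T x = chi (symmDiff S T) x := by
  rw [chi_eq_prod_univ, chi_eq_prod_univ, chi_eq_prod_univ, ← Finset.prod_mul_distrib]
  refine Finset.prod_congr rfl fun i _ => ?_
  by_cases hS : i ∈ S <;> by_cases hT : i ∈ T <;>
    simp [hS, hT, Finset.mem_symmDiff, sgn_mul_self]

lemma sum_chi (S : Finset (Fin n)) :
    ∑ x : Fin n → Bool, chi S x = if S = ∅ then (2:ℝ) ^ n else 0 := by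
  simp only [chi_eq_prod_univ]
  have hps := Finset.prod_univ_sum (fun _ : Fin n => (univ : Finset Bool))
    (fun i b => if i ∈ S then sgn b else 1)
  rw [Fintype.piFinset_univ] at hps
  rw [← hps]
  rcases eq_or_ne S ∅ with rfl | hS
  · simp
  · rw [if_neg hS]
    obtain ⟨i, hi⟩ := Finset.nonempty_iff_ne_empty.2 hS
    refine Finset.prod_eq_zero (Finset.mem_univ i) ?_
    simp [hi, sgn]

lemma uexp_chi (S : Finset (Fin n)) :
    uexp (chi S) = if S = ∅ then 1 else 0 := by
  rw [uexp, sum_chi, card_cube]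
  split <;> simp [ne_of_gt (two_pow_pos (n := n))]

lemma uexp_add (f g : (Fin n → Bool) → ℝ) :
    uexp (fun x => f x + g x) = uexp f + uexp g := by
  simp [uexp, Finset.sum_add_distrib, add_div]

lemma uexp_sum {ι : Type*} (A : Finset ι) (g : ι → (Fin n → Bool) → ℝ) :
    uexp (fun x => ∑ S ∈ A, g S x) = ∑ S ∈ A, uexp (g S) := by
  simp only [uexp, ← Finset.sum_div]
  rw [Finset.sum_comm]

lemma chi_congr (S : Finset (Fin n)) {x y : Fin n → Bool}
    (hxy : ∀ i ∈ S, x i = y i) : chi S x = chi S y :=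
  Finset.prod_congr rfl fun i hi => by rw [hxy i hi]

end Stmt9Aux
namespace Stmt9Aux

open Finset

variable {n : ℕ}

lemma sum_chi_mul_chi (x x₀ : Fin n → Bool) :
    ∑ S : Finset (Fin n), chi S x * chi S x₀
      = if x = x₀ then (2:ℝ) ^ n else 0 := by
  have h1 : ∀ S : Finset (Fin n), chi S x * chi S x₀
      = ∏ i ∈ S, (sgn (x i) * sgn (x₀ i)) := by
    intro S; rw [Finset.prod_mul_distrib]; rfl
  simp only [h1]
  have h2 : ∑ S : Finset (Fin n), ∏ i ∈ S, (sgn (x i) * sgn (x₀ i))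
      = ∏ i, (sgn (x i) * sgn (x₀ i) + 1) := by
    rw [Finset.prod_add]
    simp [Finset.powerset_univ]
  rw [h2]
  have h3 : ∀ i, sgn (x i) * sgn (x₀ i) + 1
      = if x i = x₀ i then (2:ℝ) else 0 := by
    intro i; cases hx : x i <;> cases hx0 : x₀ i <;> simp [sgn] <;> norm_num
  simp only [h3]
  by_cases hx : x = x₀
  · subst hx; simp
  · rw [if_neg hx]
    obtain ⟨i, hi⟩ : ∃ i, x i ≠ x₀ i := by
      by_contra hc; push_neg at hc; exact hx (funext hc)
    exact Finset.prod_eq_zero (Finset.mem_univ i) (by simp [hi])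

/-- Fourier inversion. -/
lemma inversion (f : (Fin n → Bool) → ℝ) (x₀ : Fin n → Bool) :
    f x₀ = ∑ S : Finset (Fin n), fCoeff f S * chi S x₀ := by
  have hc : (Fintype.card (Fin n → Bool) : ℝ) = 2 ^ n := card_cube
  have h2 : ((2:ℝ) ^ n) ≠ 0 := ne_of_gt two_pow_pos
  simp only [fCoeff, uexp, hc]
  have step : ∀ S : Finset (Fin n), (∑ x, f x * chi S x) / 2^n * chi S x₀
      = (∑ x, f x * (chi S x * chi S x₀)) / (2:ℝ)^n := by
    intro S
    rw [div_mul_eq_mul_div, Finset.sum_mul]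
    congr 1; exact Finset.sum_congr rfl fun x _ => by ring
  simp only [step]
  rw [← Finset.sum_div, Finset.sum_comm]
  simp only [← Finset.mul_sum, sum_chi_mul_chi]
  have hs : ∑ x : Fin n → Bool, f x * (if x = x₀ then (2:ℝ)^n else 0)
      = f x₀ * 2^n := by
    simp [mul_ite, Finset.sum_ite_eq']
  rw [hs, mul_div_assoc, div_self h2, mul_one]

end Stmt9Aux
namespace Stmt9Aux

open Finset

variable {n : ℕ}

/-- Coefficient triangle bound. -/
lemma abs_fCoeff_le {f : (Fin n → Bool) → ℝ} {M : ℝ} (hf : ∀ x, |f x| ≤ M)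
    (S : Finset (Fin n)) : |fCoeff f S| ≤ M := by
  have hc : (Fintype.card (Fin n → Bool) : ℝ) = 2 ^ n := card_cube
  have h2 : (0:ℝ) < 2 ^ n := two_pow_pos
  rw [fCoeff, uexp, hc, abs_div, abs_of_pos h2, div_le_iff₀ h2]
  calc |∑ x : Fin n → Bool, f x * chi S x| ≤ ∑ x : Fin n → Bool, |f x * chi S x| :=
        Finset.abs_sum_le_sum_abs _ _
    _ ≤ ∑ _x : Fin n → Bool, M := by
        refine Finset.sum_le_sum fun x _ => ?_
        rw [abs_mul, abs_chi, mul_one]; exact hf x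
    _ ≤ M * (2:ℝ)^n := by
        rw [Finset.sum_const, nsmul_eq_mul]
        norm_num [Fintype.card_fun, mul_comm]
  
/-- Junta Fourier support. -/
lemma junta_fCoeff_eq_zero {f : (Fin n → Bool) → ℝ} {T : Finset (Fin n)}
    (hT : ∀ x y, (∀ i ∈ T, x i = y i) → f x = f y)
    {S : Finset (Fin n)} (hS : ¬ S ⊆ T) : fCoeff f S = 0 := by
  obtain ⟨i, hiS, hiT⟩ : ∃ i, i ∈ S ∧ i ∉ T := by
    rcases Finset.not_subset.1 hS with ⟨i, h1, h2⟩; exact ⟨i, h1, h2⟩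
  set σ : (Fin n → Bool) → (Fin n → Bool) := fun x => Function.update x i (!x i) with hσ
  have hinv : Function.Involutive σ := by
    intro x; funext j
    by_cases hj : j = i
    · subst hj; simp [hσ, Function.update_self]
    · simp [hσ, Function.update_of_ne hj]
  have hsum : ∑ x : Fin n → Bool, f x * chi S x
      = ∑ x : Fin n → Bool, f (σ x) * chi S (σ x) :=
    (Equiv.sum_comp hinv.toPerm (fun x => f x * chi S x)).symm
  have hfσ : ∀ x, f (σ x) = f x := by
    intro x
    refine hT _ _ fun j hj => ?_
    have hj' : j ≠ i := fun hji => hiT (hji ▸ hj)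
    simp [hσ, Function.update_of_ne hj']
  have hχσ : ∀ x, chi S (σ x) = - chi S x := by
    intro x
    rw [chi, chi, ← Finset.mul_prod_erase S _ hiS, ← Finset.mul_prod_erase S _ hiS]
    have h1 : σ x i = !x i := by simp [hσ]
    have h2 : ∀ j ∈ S.erase i, sgn (σ x j) = sgn (x j) := by
      intro j hj
      have hj' : j ≠ i := Finset.ne_of_mem_erase hj
      simp [hσ, Function.update_of_ne hj']
    rw [Finset.prod_congr rfl h2, h1, sgn_not]
    ring
  have : ∑ x : Fin n → Bool, f x * chi S x = 0 := by
    have h2 := hsum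
    simp only [hfσ, hχσ, mul_neg, Finset.sum_neg_distrib] at h2
    linarith
  rw [fCoeff, uexp, this, zero_div]

end Stmt9Aux
namespace Stmt9Aux

open Finset

lemma pow_one_add_le (m : ℕ) (x : ℝ) (hx : 0 ≤ x) (hmx : 2 * m * x ≤ 1) :
    (1 + x) ^ m ≤ 1 + 2 * m * x := by
  induction m with
  | zero => simp
  | succ k ih =>
    have hk : 2 * (k:ℝ) * x ≤ 1 := by
      have : (k:ℝ) ≤ (k+1:ℕ) := by push_cast; linarith
      nlinarith [Nat.cast_nonneg (α := ℝ) k]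
    have h1 : (1 + x) ^ (k+1) = (1 + x) ^ k * (1 + x) := by ring
    have h2 : (1 + x) ^ k * (1 + x) ≤ (1 + 2 * k * x) * (1 + x) := by
      have := ih hk
      nlinarith [pow_nonneg (by linarith : (0:ℝ) ≤ 1 + x) k]
    have h3 : (1 + 2 * (k:ℝ) * x) * (1 + x) ≤ 1 + 2 * ((k:ℕ)+1:ℝ) * x := by
      nlinarith [Nat.cast_nonneg (α := ℝ) k]
    push_cast
    push_cast at h3
    calc (1 + x) ^ (k+1) ≤ (1 + 2 * k * x) * (1 + x) := by rw [h1]; exact h2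
      _ ≤ _ := h3

lemma one_add_inv_pow_le_three (n : ℕ) (hn : 1 ≤ n) :
    (1 + 1 / (n:ℝ)) ^ n ≤ 3 := by
  have hn0 : (0:ℝ) < n := by exact_mod_cast hn
  have h1 : (1 + 1 / (n:ℝ)) ≤ Real.exp (1 / n) := by
    have := Real.add_one_le_exp (1 / (n:ℝ)); linarith
  have h2 : (1 + 1 / (n:ℝ)) ^ n ≤ Real.exp (1 / n) ^ n := by
    apply pow_le_pow_left₀ (by positivity) h1
  have h3 : Real.exp (1 / (n:ℝ)) ^ n = Real.exp 1 := by
    rw [← Real.exp_nat_mul]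
    congr 1
    field_simp
  calc (1 + 1 / (n:ℝ)) ^ n ≤ Real.exp 1 := h3 ▸ h2
    _ ≤ 3 := Real.exp_one_lt_d9.le.trans (by norm_num)

lemma three_two_pow_le (n d : ℕ) (hn : 5 ≤ n) :
    3 * (2:ℝ) ^ d ≤ (n:ℝ) ^ (d + 3) := by
  have hn5 : (5:ℝ) ≤ (n:ℝ) := by exact_mod_cast hn
  calc 3 * (2:ℝ) ^ d ≤ 5^3 * (5:ℝ) ^ d := by
        have : (2:ℝ)^d ≤ 5^d := pow_le_pow_left₀ (by norm_num) (by norm_num) d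
        nlinarith [pow_nonneg (by norm_num : (0:ℝ) ≤ 2) d]
    _ = (5:ℝ) ^ (d + 3) := by ring
    _ ≤ (n:ℝ) ^ (d + 3) := pow_le_pow_left₀ (by norm_num) hn5 _

/-- `∑_S ε^{|S|} = (1+ε)^n`. -/
lemma sum_eps_pow (n : ℕ) (ε : ℝ) :
    ∑ S : Finset (Fin n), ε ^ S.card = (1 + ε) ^ n := by
  have h : ∀ S : Finset (Fin n), ε ^ S.card = ∏ _i ∈ S, ε := by
    intro S; rw [Finset.prod_const]
  simp only [h]
  have := Finset.prod_add (fun _ : Fin n => ε) (fun _ : Fin n => (1:ℝ)) Finset.univ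
  simp only [Finset.prod_const_one, mul_one, Finset.powerset_univ] at this
  rw [← this]
  simp [add_comm]

end Stmt9Aux
namespace Stmt9Aux

open Finset

variable {n : ℕ}

lemma uexp_const_mul (a : ℝ) (g : (Fin n → Bool) → ℝ) :
    uexp (fun x => a * g x) = a * uexp g := by
  simp [uexp, ← Finset.mul_sum, mul_div_assoc]

lemma uexp_neg (g : (Fin n → Bool) → ℝ) :
    uexp (fun x => -(g x)) = - uexp g := by
  simp [uexp, Finset.sum_neg_distrib, neg_div]

lemma uexp_mul_eq_sum (F h : (Fin n → Bool) → ℝ) :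
    uexp (fun x => F x * h x) = ∑ S : Finset (Fin n), fCoeff h S * fCoeff F S := by
  have h1 : (fun x => F x * h x)
      = fun x => ∑ S : Finset (Fin n), fCoeff h S * (F x * chi S x) := by
    funext x
    conv_lhs => rw [inversion h x]
    rw [Finset.mul_sum]
    exact Finset.sum_congr rfl fun S _ => by ring
  rw [h1, uexp_sum]
  exact Finset.sum_congr rfl fun S _ => uexp_const_mul _ _

lemma fCoeff_mul_eq_sum (L c : (Fin n → Bool) → ℝ) (S : Finset (Fin n)) :
    fCoeff (fun x => L x * c x) S
      = ∑ T : Finset (Fin n), fCoeff c T * fCoeff L (symmDiff S T) := by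
  have h1 : (fun x => (L x * c x) * chi S x)
      = fun x => ∑ T : Finset (Fin n),
          fCoeff c T * (L x * chi (symmDiff S T) x) := by
    funext x
    conv_lhs => rw [inversion c x]
    rw [Finset.mul_sum, Finset.sum_mul]
    refine Finset.sum_congr rfl fun T _ => ?_
    rw [symmDiff_comm, ← chi_mul]
    ring
  rw [fCoeff, h1, uexp_sum]
  exact Finset.sum_congr rfl fun T _ => uexp_const_mul _ _

end Stmt9Aux
open Finset Stmt9Aux in
/-- the main robustness estimate for separating functionals against
products of juntas and decaying perturbations. -/
theorem stmt9 (n d : ℕ) (hn : 2 ≤ n) (hd : 1 ≤ d) (hdn : 4 * d < n)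
    (L : (Fin n → Bool) → ℝ)
    (hdegL : fdeg L ≤ 4 * d)
    (hLpos : ∀ p : (Fin n → Bool) → ℝ, (∀ x, 0 ≤ p x) → IsJunta (4 * d) p →
      0 ≤ uexp (fun x => L x * p x))
    (hLcoeff : ∀ S : Finset (Fin n), S.card ≤ 4 * d → |fCoeff L S| ≤ 1)
    (hLinf : ∀ x, |L x| ≤ (n : ℝ) ^ (4 * d))
    (c : (Fin n → Bool) → ℝ) (hc0 : ∀ x, 0 ≤ c x) (hcj : IsJunta d c)
    (hcinf : ∀ x, |c x| ≤ 1)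
    (h : (Fin n → Bool) → ℝ) (hdec : IsDecaying (1 / (n : ℝ) ^ 4) h) :
    -(1 / (n : ℝ) ^ (8 * d)) ≤ uexp (fun x => L x * c x * (1 + h x)) := by
  classical
  obtain ⟨T₀, hT₀c, hT₀⟩ := hcj
  set F : (Fin n → Bool) → ℝ := fun x => L x * c x with hF
  set A := uexp F with hA
  have hn5 : 5 ≤ n := by omega
  have hnR : (5:ℝ) ≤ (n:ℝ) := by exact_mod_cast hn5
  have hnpos : (0:ℝ) < n := by linarith
  set ε : ℝ := 1 / (n:ℝ)^4 with hε
  have hε0 : 0 ≤ ε := by positivity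
  have hA0 : 0 ≤ A := hLpos c hc0 ⟨T₀, le_trans hT₀c (by omega), hT₀⟩
  have hnn : (0:ℝ) ≤ (n:ℝ) := le_of_lt hnpos
  have hsq : 25 ≤ (n:ℝ) * (n:ℝ) := by nlinarith [hnR]
  have hcube : 125 ≤ (n:ℝ)^3 := by nlinarith [hsq, hnR]
  have hquart : 2 * (n:ℝ) ≤ (n:ℝ)^4 := by nlinarith [hcube, hnR, hnn]
  have hh := hdec.2
  have hh0 : fCoeff h ∅ = 0 := by
    have h1 : fCoeff h ∅ = uexp h := by
      rw [fCoeff]; congr 1; funext x; simp [chi]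
    rw [h1, hdec.1]
  -- universal coefficient bound
  have hw_all : ∀ S : Finset (Fin n), |fCoeff F S| ≤ 2^d := by
    intro S
    rw [hF, fCoeff_mul_eq_sum]
    have hterm : ∀ T : Finset (Fin n),
        |fCoeff c T * fCoeff L (symmDiff S T)| ≤ if T ⊆ T₀ then 1 else 0 := by
      intro T
      by_cases hT : T ⊆ T₀
      · rw [if_pos hT, abs_mul]
        have h1 : |fCoeff c T| ≤ 1 := abs_fCoeff_le hcinf T
        have h2 : |fCoeff L (symmDiff S T)| ≤ 1 := by
          by_cases hcard : (symmDiff S T).card ≤ 4*d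
          · exact hLcoeff _ hcard
          · have hz : fCoeff L (symmDiff S T) = 0 := by
              by_contra hne
              have hle : (symmDiff S T).card ≤ fdeg L := by
                refine Finset.le_sup ?_
                simp [hne]
              omega
            simp [hz]
        calc |fCoeff c T| * |fCoeff L (symmDiff S T)| ≤ 1 * 1 :=
              mul_le_mul h1 h2 (abs_nonneg _) zero_le_one
          _ = 1 := one_mul 1
      · rw [if_neg hT, junta_fCoeff_eq_zero hT₀ hT, zero_mul, abs_zero]
    calc |∑ T : Finset (Fin n), fCoeff c T * fCoeff L (symmDiff S T)|
        ≤ ∑ T : Finset (Fin n), |fCoeff c T * fCoeff L (symmDiff S T)| :=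
          Finset.abs_sum_le_sum_abs _ _
      _ ≤ ∑ T : Finset (Fin n), (if T ⊆ T₀ then (1:ℝ) else 0) :=
          Finset.sum_le_sum fun T _ => hterm T
      _ = ((Finset.univ.filter (fun T : Finset (Fin n) => T ⊆ T₀)).card : ℝ) := by
          rw [Finset.sum_boole]
      _ = ((2:ℝ) ^ T₀.card) := by
          have he : Finset.univ.filter (fun T : Finset (Fin n) => T ⊆ T₀)
              = T₀.powerset := by
            ext T; simp [Finset.mem_powerset]
          rw [he, Finset.card_powerset]
          push_cast; ring
      _ ≤ (2:ℝ)^d := by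
          apply pow_le_pow_right₀ (by norm_num) hT₀c
  -- small coefficient bound
  have hw_small : ∀ S : Finset (Fin n), S.card ≤ 3*d → |fCoeff F S| ≤ A := by
    intro S hS
    have hchiB : ∀ x, -1 ≤ chi S x ∧ chi S x ≤ 1 := fun x =>
      abs_le.mp (le_of_eq (abs_chi S x))
    have hjunta : ∀ (s : ℝ), IsJunta (4*d) (fun x => c x * (1 + s * chi S x)) := by
      intro s
      refine ⟨T₀ ∪ S, ?_, ?_⟩
      · calc (T₀ ∪ S).card ≤ T₀.card + S.card := Finset.card_union_le _ _
          _ ≤ 4*d := by omega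
      · intro x y hxy
        have h1 : c x = c y := hT₀ x y fun i hi => hxy i (Finset.mem_union_left _ hi)
        have h2 : chi S x = chi S y := chi_congr S fun i hi =>
          hxy i (Finset.mem_union_right _ hi)
        show c x * (1 + s * chi S x) = c y * (1 + s * chi S y)
        rw [h1, h2]
    have hexp : ∀ (s : ℝ), uexp (fun x => L x * (c x * (1 + s * chi S x)))
        = A + s * fCoeff F S := by
      intro s
      have hpt : (fun x => L x * (c x * (1 + s * chi S x)))
          = fun x => F x + s * (F x * chi S x) := by
        funext x; simp only [hF]; ring
      rw [hpt, uexp_add, uexp_const_mul]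
      rfl
    have hplus : 0 ≤ A + 1 * fCoeff F S := by
      rw [← hexp 1]
      refine hLpos _ (fun x => mul_nonneg (hc0 x) ?_) (hjunta 1)
      have := (hchiB x).1; linarith
    have hminus : 0 ≤ A + (-1) * fCoeff F S := by
      rw [← hexp (-1)]
      refine hLpos _ (fun x => mul_nonneg (hc0 x) ?_) (hjunta (-1))
      have := (hchiB x).2; linarith
    rw [abs_le]; constructor <;> linarith
  -- main decomposition
  have key : uexp (fun x => L x * c x * (1 + h x))
      = A + ∑ S : Finset (Fin n), fCoeff h S * fCoeff F S := by
    have hpt : (fun x => L x * c x * (1 + h x)) = fun x => F x + F x * h x := by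
      funext x; simp only [hF]; ring
    rw [hpt, uexp_add, uexp_mul_eq_sum F h]
  rw [key]
  -- split sum
  rw [← Finset.sum_filter_add_sum_filter_not Finset.univ
    (fun S : Finset (Fin n) => S.card ≤ 3*d) (fun S => fCoeff h S * fCoeff F S)]
  set E1 := ∑ S ∈ Finset.univ.filter (fun S : Finset (Fin n) => S.card ≤ 3*d),
    fCoeff h S * fCoeff F S with hE1def
  set E2 := ∑ S ∈ Finset.univ.filter (fun S : Finset (Fin n) => ¬ S.card ≤ 3*d),
    fCoeff h S * fCoeff F S with hE2def
  -- bound E1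
  have hE1 : -A ≤ E1 := by
    have hterm : ∀ S ∈ Finset.univ.filter (fun S : Finset (Fin n) => S.card ≤ 3*d),
        -(A * (if S = ∅ then 0 else ε ^ S.card)) ≤ fCoeff h S * fCoeff F S := by
      intro S hSm
      rcases eq_or_ne S ∅ with rfl | hSe
      · simp [hh0]
      · rw [if_neg hSe]
        have h1 : |fCoeff h S * fCoeff F S| ≤ ε ^ S.card * A := by
          rw [abs_mul]
          exact mul_le_mul (hh S) (hw_small S (by simpa using hSm)) (abs_nonneg _)
            (by positivity)
        have h2 := neg_abs_le (fCoeff h S * fCoeff F S)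
        have h3 : ε ^ S.card * A = A * ε ^ S.card := mul_comm _ _
        linarith [h1, h2, h3.le]
    have hsum1 : ∑ S ∈ Finset.univ.filter (fun S : Finset (Fin n) => S.card ≤ 3*d),
        A * (if S = ∅ then 0 else ε ^ S.card) ≤ A := by
      calc _ ≤ ∑ S : Finset (Fin n), A * (if S = ∅ then 0 else ε ^ S.card) := by
            refine Finset.sum_le_sum_of_subset_of_nonneg (Finset.filter_subset _ _)
              fun S _ _ => ?_
            positivity
        _ = A * ∑ S : Finset (Fin n), (if S = ∅ then 0 else ε ^ S.card) := by
            rw [Finset.mul_sum]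
        _ ≤ A * 1 := by
            refine mul_le_mul_of_nonneg_left ?_ hA0
            have hsplit : ∑ S : Finset (Fin n), (if S = ∅ then (0:ℝ) else ε ^ S.card)
                = (∑ S : Finset (Fin n), ε ^ S.card) - 1 := by
              have hmem : (∅ : Finset (Fin n)) ∈ Finset.univ := Finset.mem_univ _
              rw [← Finset.add_sum_erase _ _ hmem, ← Finset.add_sum_erase _ _ hmem]
              have hrw : ∑ S ∈ (Finset.univ : Finset (Finset (Fin n))).erase ∅,
                    (if S = ∅ then (0:ℝ) else ε ^ S.card)
                  = ∑ S ∈ (Finset.univ : Finset (Finset (Fin n))).erase ∅,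
                    ε ^ S.card := by
                refine Finset.sum_congr rfl fun S hSm => ?_
                rw [if_neg (Finset.ne_of_mem_erase hSm)]
              rw [hrw]
              simp
            rw [hsplit, sum_eps_pow]
            have h2ne : 2 * (n:ℝ) * ε ≤ 1 := by
              rw [hε, mul_one_div, div_le_one (by positivity)]
              exact hquart
            have := pow_one_add_le n ε hε0 h2ne
            linarith
        _ = A := mul_one A
    have := Finset.sum_le_sum hterm
    rw [Finset.sum_neg_distrib] at this
    rw [hE1def]
    calc -A ≤ -(∑ S ∈ Finset.univ.filter (fun S : Finset (Fin n) => S.card ≤ 3*d),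
          A * (if S = ∅ then 0 else ε ^ S.card)) := by linarith [hsum1]
      _ ≤ E1 := by rw [hE1def]; exact this
  -- bound E2
  have hE2 : -(1 / (n:ℝ)^(8*d)) ≤ E2 := by
    set K : ℝ := 2^d * (1/(n:ℝ)^3)^(3*d+1) with hK
    have hK0 : 0 ≤ K := by positivity
    have hterm : ∀ S ∈ Finset.univ.filter (fun S : Finset (Fin n) => ¬ S.card ≤ 3*d),
        -(K * (1/(n:ℝ))^S.card) ≤ fCoeff h S * fCoeff F S := by
      intro S hSm
      have hScard : 3*d + 1 ≤ S.card := by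
        have := Finset.mem_filter.mp hSm
        omega
      have hεdec : ε ^ S.card ≤ (1/(n:ℝ)^3)^(3*d+1) * (1/(n:ℝ))^S.card := by
        have hsplit : ε = (1/(n:ℝ)^3) * (1/(n:ℝ)) := by
          rw [hε]; field_simp
        rw [hsplit, mul_pow]
        refine mul_le_mul_of_nonneg_right ?_ (by positivity)
        refine pow_le_pow_of_le_one (by positivity) ?_ hScard
        rw [div_le_one (by positivity)]
        linarith [hcube]
      have h1 : |fCoeff h S * fCoeff F S| ≤ K * (1/(n:ℝ))^S.card := by
        rw [abs_mul, hK]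
        calc |fCoeff h S| * |fCoeff F S| ≤ ε ^ S.card * 2^d :=
              mul_le_mul (hh S) (hw_all S) (abs_nonneg _) (by positivity)
          _ ≤ ((1/(n:ℝ)^3)^(3*d+1) * (1/(n:ℝ))^S.card) * 2^d := by
              refine mul_le_mul_of_nonneg_right hεdec (by positivity)
          _ = 2^d * (1/(n:ℝ)^3)^(3*d+1) * (1/(n:ℝ))^S.card := by ring
      have h2 := neg_abs_le (fCoeff h S * fCoeff F S)
      linarith
    have hsum2 : ∑ S ∈ Finset.univ.filter (fun S : Finset (Fin n) => ¬ S.card ≤ 3*d),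
        K * (1/(n:ℝ))^S.card ≤ 1 / (n:ℝ)^(8*d) := by
      calc _ ≤ ∑ S : Finset (Fin n), K * (1/(n:ℝ))^S.card := by
            refine Finset.sum_le_sum_of_subset_of_nonneg (Finset.filter_subset _ _)
              fun S _ _ => by positivity
        _ = K * ∑ S : Finset (Fin n), (1/(n:ℝ))^S.card := by rw [Finset.mul_sum]
        _ = K * (1 + 1/(n:ℝ))^n := by rw [sum_eps_pow]
        _ ≤ K * 3 := mul_le_mul_of_nonneg_left
            (one_add_inv_pow_le_three n (by omega)) hK0
        _ ≤ 1 / (n:ℝ)^(8*d) := by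
            rw [hK]
            have hgoal : 3 * (2:ℝ)^d * (n:ℝ)^(8*d) ≤ ((n:ℝ)^3)^(3*d+1) := by
              have h1 : 3 * (2:ℝ)^d ≤ (n:ℝ)^(d+3) := three_two_pow_le n d hn5
              have h2 : ((n:ℝ)^3)^(3*d+1) = (n:ℝ)^(d+3) * (n:ℝ)^(8*d) := by
                rw [← pow_mul, ← pow_add]
                congr 1
                ring
              rw [h2]
              refine mul_le_mul_of_nonneg_right h1 (by positivity)
            have hp1 : (0:ℝ) < (n:ℝ)^(8*d) := by positivity
            have hp2 : (0:ℝ) < ((n:ℝ)^3)^(3*d+1) := by positivity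
            have e1 : (2:ℝ)^d * (1/(n:ℝ)^3)^(3*d+1) * 3
                = (3 * 2^d) / ((n:ℝ)^3)^(3*d+1) := by
              rw [one_div_pow]; ring
            rw [e1, div_le_div_iff₀ hp2 hp1, one_mul]
            linarith [hgoal]
    have := Finset.sum_le_sum hterm
    rw [Finset.sum_neg_distrib] at this
    rw [hE2def]
    calc -(1 / (n:ℝ)^(8*d)) ≤ -(∑ S ∈ Finset.univ.filter
          (fun S : Finset (Fin n) => ¬ S.card ≤ 3*d), K * (1/(n:ℝ))^S.card) := by
          linarith [hsum2]
      _ ≤ E2 := by rw [hE2def]; exact this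
  linarith
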